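/- arXiv:2510.23210 — 3 statements merged into one kernel-verified Lean document; each statement's English description precedes it below -/
import Mathlib

section
/- Let B be a Banach space and f ∈ C^1([0,T]; B) with Hölder-continuous derivative: ‖f'(t) - f'(s)‖_B ≤ C̃ |t - s|^γ for all s,t ∈ [0,T], for some γ ∈ (0,1]. Then for any interval [a, a+κ] ⊆ [0,T], the trapezoidal quadrature error satisfies ‖(f(a) + f(a+κ))/2 - (1/κ) ∫_a^{a+κ} f(ξ) dξ‖_B ≤ C̃ κ^{1+γ} / ((γ+2)(γ+3)). -/
open MeasureTheory intervalIntegral Set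


/-- Trapezoidal quadrature error for a C^{1,γ} Banach-space-valued function. -/
theorem trapezoid_error_holder {B : Type*} [NormedAddCommGroup B] [NormedSpace ℝ B]
    [CompleteSpace B] (T : ℝ) (hT : 0 < T) (f f' : ℝ → B) (γ Ct : ℝ)
    (hγ : γ ∈ Set.Ioc (0 : ℝ) 1) (hC : 0 ≤ Ct)
    (hderiv : ∀ t ∈ Set.Icc (0 : ℝ) T, HasDerivWithinAt f (f' t) (Set.Icc (0 : ℝ) T) t)
    (hcont : ContinuousOn f' (Set.Icc (0 : ℝ) T))
    (hholder : ∀ s ∈ Set.Icc (0 : ℝ) T, ∀ t ∈ Set.Icc (0 : ℝ) T,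
      ‖f' t - f' s‖ ≤ Ct * |t - s| ^ γ)
    (a κ : ℝ) (ha : 0 ≤ a) (hκ : 0 < κ) (haκ : a + κ ≤ T) :
    ‖(2 : ℝ)⁻¹ • (f a + f (a + κ)) - κ⁻¹ • ∫ ξ in a..(a + κ), f ξ‖
      ≤ Ct * κ ^ (1 + γ) / ((γ + 2) * (γ + 3)) := by
  obtain ⟨hγ0, hγ1⟩ := hγ
  set b := a + κ with hbdef
  set m := a + κ / 2 with hmdef
  have hab : a ≤ b := by simp only [hbdef]; linarith
  have hsub : Icc a b ⊆ Icc (0:ℝ) T := Icc_subset_Icc ha haκ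
  have hfc : ContinuousOn f (Icc (0:ℝ) T) := fun t ht => (hderiv t ht).continuousWithinAt
  have hfcab : ContinuousOn f (Icc a b) := hfc.mono hsub
  have hf'cab : ContinuousOn f' (Icc a b) := hcont.mono hsub
  have hint_f : IntervalIntegrable f volume a b := hfcab.intervalIntegrable_of_Icc hab
  have hcw : Continuous (fun ξ : ℝ => ξ - m) := continuous_id.sub continuous_const
  have hint_wf' : IntervalIntegrable (fun ξ => (ξ - m) • f' ξ) volume a b :=
    (hcw.continuousOn.smul hf'cab).intervalIntegrable_of_Icc hab
  -- Step A: integration by parts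
  have keyA : ∫ ξ in a..b, (ξ - m) • f' ξ
      = ((b - m) • f b - ∫ ξ in a..b, f ξ) - (a - m) • f a := by
    have hF : ∀ x ∈ Ioo a b, HasDerivWithinAt
        (fun ξ => (ξ - m) • f ξ - ∫ s in a..ξ, f s) ((x - m) • f' x) (Ioi x) x := by
      intro x hx
      have hx0T : x ∈ Icc (0:ℝ) T := hsub ⟨hx.1.le, hx.2.le⟩
      have hxI : x ∈ Ico (0:ℝ) T := ⟨hx0T.1, lt_of_lt_of_le hx.2 haκ⟩
      have hdf : HasDerivWithinAt f (f' x) (Ioi x) x :=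
        (hderiv x hx0T).mono_of_mem_nhdsWithin (Icc_mem_nhdsGT_of_mem hxI)
      have hdw : HasDerivWithinAt (fun ξ : ℝ => ξ - m) 1 (Ioi x) x :=
        ((hasDerivWithinAt_id x (Ioi x)).sub_const m)
      have hprod : HasDerivWithinAt (fun ξ => (ξ - m) • f ξ)
          ((x - m) • f' x + (1:ℝ) • f x) (Ioi x) x := hdw.smul hdf
      have hxint : x ∈ Ioo (0:ℝ) T :=
        ⟨lt_of_le_of_lt ha hx.1, lt_of_lt_of_le hx.2 haκ⟩
      have hcx : ContinuousAt f x := hfc.continuousAt (Icc_mem_nhds hxint.1 hxint.2)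
      have hmeas : StronglyMeasurableAtFilter f (nhds x) volume :=
        ContinuousOn.stronglyMeasurableAtFilter isOpen_Ioo
          (hfc.mono Ioo_subset_Icc_self) x hxint
      have hss : Set.uIcc a x ⊆ Set.uIcc a b := by
        rw [uIcc_of_le (le_of_lt hx.1), uIcc_of_le hab]
        exact Icc_subset_Icc le_rfl hx.2.le
      have hprim : HasDerivAt (fun u => ∫ s in a..u, f s) (f x) x :=
        intervalIntegral.integral_hasDerivAt_right (hint_f.mono_set hss) hmeas hcx
      have hres := hprod.sub (hprim.hasDerivWithinAt (s := Ioi x))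
      simpa [one_smul, add_sub_cancel_right, Pi.sub_def] using hres
    have hcF : ContinuousOn (fun ξ => (ξ - m) • f ξ - ∫ s in a..ξ, f s) (Icc a b) := by
      refine (hcw.continuousOn.smul hfcab).sub ?_
      exact (intervalIntegral.continuousOn_primitive_interval' hint_f
        left_mem_uIcc).mono Icc_subset_uIcc
    have := intervalIntegral.integral_eq_sub_of_hasDeriv_right_of_le hab hcF hF hint_wf'
    simpa [intervalIntegral.integral_same] using this
  have hκ0 : κ ≠ 0 := ne_of_gt hκ
  -- Step B: rewrite the error as κ⁻¹ • ∫ (ξ - m) • f' ξ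
  have keyE : (2:ℝ)⁻¹ • (f a + f b) - κ⁻¹ • ∫ ξ in a..b, f ξ
      = κ⁻¹ • ∫ ξ in a..b, (ξ - m) • f' ξ := by
    rw [keyA]
    have h1 : b - m = κ / 2 := by rw [hbdef, hmdef]; ring
    have h2 : a - m = -(κ / 2) := by rw [hmdef]; ring
    rw [h1, h2]
    match_scalars <;> field_simp
  -- Step C: reflection ξ ↦ a + b - ξ
  have hmaps : ∀ ξ ∈ Icc a b, a + b - ξ ∈ Icc a b := by
    intro ξ hξ
    constructor <;> [linarith [hξ.2]; linarith [hξ.1]]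
  have hint_wf'r : IntervalIntegrable (fun ξ => (ξ - m) • f' (a + b - ξ)) volume a b := by
    refine (hcw.continuousOn.smul ?_).intervalIntegrable_of_Icc hab
    exact hf'cab.comp ((continuous_const.sub continuous_id).continuousOn) hmaps
  have hrefl : (∫ ξ in a..b, (ξ - m) • f' (a + b - ξ))
      = - ∫ ξ in a..b, (ξ - m) • f' ξ := by
    have hcs := intervalIntegral.integral_comp_sub_left
      (a := a) (b := b) (fun ξ => (ξ - m) • f' ξ) (a + b)
    simp only [add_sub_cancel_left, add_sub_cancel_right] at hcs
    have hw : ∀ ξ : ℝ, (a + b - ξ - m) • f' (a + b - ξ) = -((ξ - m) • f' (a + b - ξ)) := by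
      intro ξ
      have : a + b - ξ - m = -(ξ - m) := by rw [hbdef, hmdef]; ring
      rw [this, neg_smul]
    simp only [hw] at hcs
    rw [intervalIntegral.integral_neg] at hcs
    rw [← hcs, neg_neg]
  -- integrand with difference, and halving identity
  have hsmulsub : (fun ξ => (ξ - m) • (f' ξ - f' (a + b - ξ)))
      = fun ξ => (ξ - m) • f' ξ - (ξ - m) • f' (a + b - ξ) := by
    funext ξ; rw [smul_sub]
  have hdiffint : IntervalIntegrable (fun ξ => (ξ - m) • (f' ξ - f' (a + b - ξ))) volume a b := by
    rw [hsmulsub]; exact hint_wf'.sub hint_wf'r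
  have hII : (∫ ξ in a..b, (ξ - m) • f' ξ)
      = (2:ℝ)⁻¹ • ∫ ξ in a..b, (ξ - m) • (f' ξ - f' (a + b - ξ)) := by
    have hsplit : ∫ ξ in a..b, (ξ - m) • (f' ξ - f' (a + b - ξ))
        = (∫ ξ in a..b, (ξ - m) • f' ξ) - ∫ ξ in a..b, (ξ - m) • f' (a + b - ξ) := by
      rw [hsmulsub]; exact intervalIntegral.integral_sub hint_wf' hint_wf'r
    rw [hsplit, hrefl, sub_neg_eq_add, ← two_smul ℝ, smul_smul]
    norm_num
  -- pointwise Hölder bound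
  have hptbound : ∀ ξ ∈ Icc a b,
      ‖(ξ - m) • (f' ξ - f' (a + b - ξ))‖ ≤ Ct * 2 ^ γ * |ξ - m| ^ (1 + γ) := by
    intro ξ hξ
    have hξT : ξ ∈ Icc (0:ℝ) T := hsub hξ
    have hξT' : a + b - ξ ∈ Icc (0:ℝ) T := hsub (hmaps ξ hξ)
    have hH := hholder (a + b - ξ) hξT' ξ hξT
    have habs : |ξ - (a + b - ξ)| = 2 * |ξ - m| := by
      rw [show ξ - (a + b - ξ) = 2 * (ξ - m) by rw [hbdef, hmdef]; ring, abs_mul]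
      norm_num
    rw [norm_smul, Real.norm_eq_abs]
    calc |ξ - m| * ‖f' ξ - f' (a + b - ξ)‖
        ≤ |ξ - m| * (Ct * (2 * |ξ - m|) ^ γ) := by
          refine mul_le_mul_of_nonneg_left ?_ (abs_nonneg _)
          rw [← habs]; exact hH
      _ = Ct * 2 ^ γ * |ξ - m| ^ (1 + γ) := by
          rw [Real.mul_rpow (by norm_num) (abs_nonneg _),
            Real.rpow_add' (abs_nonneg _) (by positivity), Real.rpow_one]
          ring
  -- the elementary integral
  have hbint : ∫ ξ in a..b, |ξ - m| ^ (1 + γ) = 2 * ((κ/2) ^ (2 + γ) / (2 + γ)) := by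
    have hcabs : Continuous (fun t : ℝ => |t| ^ (1 + γ)) :=
      continuous_abs.rpow_const (fun x => Or.inr (by positivity))
    have hshift := intervalIntegral.integral_comp_sub_right
      (a := a) (b := b) (fun t => |t| ^ (1 + γ)) m
    have hba : a - m = -(κ/2) := by rw [hmdef]; ring
    have hbb : b - m = κ/2 := by rw [hbdef, hmdef]; ring
    rw [hba, hbb] at hshift
    have hright : ∫ t in (0:ℝ)..(κ/2), |t| ^ (1 + γ) = (κ/2) ^ (2 + γ) / (2 + γ) := by
      have hcongr : ∫ t in (0:ℝ)..(κ/2), |t| ^ (1 + γ) = ∫ t in (0:ℝ)..(κ/2), t ^ (1 + γ) := by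
        refine intervalIntegral.integral_congr (fun t ht => ?_)
        rw [uIcc_of_le (by positivity : (0:ℝ) ≤ κ/2)] at ht
        rw [abs_of_nonneg ht.1]
      rw [hcongr, integral_rpow (Or.inl (by linarith : (-1:ℝ) < 1 + γ))]
      rw [Real.zero_rpow (by positivity : 1 + γ + 1 ≠ 0)]
      rw [show 1 + γ + 1 = 2 + γ by ring]
      ring
    have hleft : ∫ t in (-(κ/2))..(0:ℝ), |t| ^ (1 + γ) = (κ/2) ^ (2 + γ) / (2 + γ) := by
      have hneg := intervalIntegral.integral_comp_neg
        (a := (0:ℝ)) (b := κ/2) (fun t => |t| ^ (1 + γ))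
      simp only [abs_neg, neg_zero] at hneg
      rw [← hneg, hright]
    rw [hshift, ← intervalIntegral.integral_add_adjacent_intervals
        (hcabs.intervalIntegrable _ _) (hcabs.intervalIntegrable _ _) (b := (0:ℝ)),
      hleft, hright]
    ring
  -- norm of the reflected integral
  have hnorm : ‖∫ ξ in a..b, (ξ - m) • (f' ξ - f' (a + b - ξ))‖
      ≤ Ct * 2 ^ γ * (2 * ((κ/2) ^ (2 + γ) / (2 + γ))) := by
    refine le_trans (intervalIntegral.norm_integral_le_integral_norm hab) ?_
    have hgint : IntervalIntegrable (fun ξ => Ct * 2 ^ γ * |ξ - m| ^ (1 + γ)) volume a b :=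
      (continuous_const.mul ((hcw.abs).rpow_const (fun x => Or.inr (by positivity)))).intervalIntegrable _ _
    have hmono := intervalIntegral.integral_mono_on hab hdiffint.norm hgint hptbound
    refine le_trans hmono ?_
    rw [intervalIntegral.integral_const_mul, hbint]
  -- put everything together
  have h2γpos : (0:ℝ) < 2 ^ γ := Real.rpow_pos_of_pos (by norm_num) _
  have hpow : κ⁻¹ * (2⁻¹ * (Ct * 2 ^ γ * (2 * ((κ/2) ^ (2 + γ) / (2 + γ)))))
      = Ct * κ ^ (1 + γ) / (4 * (γ + 2)) := by
    rw [Real.div_rpow hκ.le (by norm_num : (0:ℝ) ≤ 2),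
      show (2:ℝ) + γ = 1 + (1 + γ) by ring,
      Real.rpow_add hκ, Real.rpow_one,
      Real.rpow_add (by norm_num : (0:ℝ) < 2), Real.rpow_one,
      Real.rpow_add (by norm_num : (0:ℝ) < 2) 1 γ, Real.rpow_one]
    have hne : (1:ℝ) + (1 + γ) ≠ 0 := by positivity
    have h2γne : (2:ℝ) ^ γ ≠ 0 := h2γpos.ne'
    field_simp
    ring
  calc ‖(2:ℝ)⁻¹ • (f a + f b) - κ⁻¹ • ∫ ξ in a..b, f ξ‖
      = κ⁻¹ * (2⁻¹ * ‖∫ ξ in a..b, (ξ - m) • (f' ξ - f' (a + b - ξ))‖) := by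
        rw [keyE, hII, norm_smul, norm_smul, Real.norm_eq_abs, Real.norm_eq_abs,
          abs_of_pos (inv_pos.mpr hκ), abs_of_pos (by norm_num : (0:ℝ) < 2⁻¹)]
    _ ≤ κ⁻¹ * (2⁻¹ * (Ct * 2 ^ γ * (2 * ((κ/2) ^ (2 + γ) / (2 + γ))))) := by
        gcongr
    _ = Ct * κ ^ (1 + γ) / (4 * (γ + 2)) := hpow
    _ ≤ Ct * κ ^ (1 + γ) / ((γ + 2) * (γ + 3)) := by
        have hnum : 0 ≤ Ct * κ ^ (1 + γ) :=
          mul_nonneg hC (Real.rpow_pos_of_pos hκ _).le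
        have hden : (0:ℝ) < (γ + 2) * (γ + 3) := by positivity
        have hle : (γ + 2) * (γ + 3) ≤ 4 * (γ + 2) := by nlinarith
        exact div_le_div_of_nonneg_left hnum hden hle
end

section
/- Let W be a standard ℝ^m-valued Brownian motion, N ∈ ℕ, T = Nτ, M = τ^{-1} ∈ ℕ. For each j = 0,...,N-1 with t_j = jτ and t_{j,ℓ} = t_j + ℓτ², let J_j = ∫_{t_j}^{t_{j+1}} W(s) ds - Σ_{ℓ=1}^M τ² W(t_{j,ℓ}). Then Σ_{j=0}^{N-1} E[‖J_j‖²_{ℝ^m}] = (m/3) T τ⁴. -/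
open MeasureTheory ProbabilityTheory

/-- A standard real-valued Brownian motion on a probability space. -/
def IsStdBM {Ω : Type} [MeasureSpace Ω] (W : ℝ → Ω → ℝ) : Prop :=
  (∀ t, Measurable (W t)) ∧ (∀ ω, W 0 ω = 0) ∧ (∀ ω, Continuous fun t => W t ω) ∧
  (∀ s t : ℝ, 0 ≤ s → s ≤ t →
    Measure.map (fun ω => W t ω - W s ω) ℙ = gaussianReal 0 (Real.toNNReal (t - s))) ∧
  (∀ a b c d : ℝ, 0 ≤ a → a ≤ b → b ≤ c → c ≤ d →
    IndepFun (fun ω => W b ω - W a ω) (fun ω => W d ω - W c ω) ℙ) ∧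
  (∀ s t : ℝ, 0 ≤ s → 0 ≤ t → ∫ ω, W s ω * W t ω ∂ℙ = min s t)


noncomputable def μI (a b : ℝ) : Measure ℝ := volume.restrict (Set.Ioc a b)

instance (a b : ℝ) : IsFiniteMeasure (μI a b) := by
  constructor
  rw [μI, Measure.restrict_apply_univ, Real.volume_Ioc]
  exact ENNReal.ofReal_lt_top

variable {Ω : Type} [MeasureSpace Ω] [IsProbabilityMeasure (ℙ : Measure Ω)]
  {W : ℝ → Ω → ℝ}

set_option linter.unusedSectionVars false

lemma jointSM (hW : IsStdBM W) : StronglyMeasurable (Function.uncurry W) :=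
  stronglyMeasurable_uncurry_of_continuous_of_stronglyMeasurable
    (u := W) hW.2.2.1 (fun t => (hW.1 t).stronglyMeasurable)

lemma memL2 (hW : IsStdBM W) {s : ℝ} (hs : 0 ≤ s) : MemLp (W s) 2 ℙ := by
  rcases eq_or_lt_of_le hs with h | h
  · have : W s = fun _ => (0:ℝ) := by funext ω; rw [← h]; exact hW.2.1 ω
    rw [this]; exact memLp_const 0
  · rw [memLp_two_iff_integrable_sq (hW.1 s).aestronglyMeasurable]
    have hint : ∫ ω, W s ω * W s ω ∂ℙ = s := by
      rw [hW.2.2.2.2.2 s s hs hs, min_self]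
    by_contra hni
    have : ∫ ω, W s ω ^ 2 ∂ℙ = 0 := integral_undef (by simpa [pow_two] using hni)
    simp only [pow_two] at this
    rw [this] at hint; exact absurd hint.symm (ne_of_gt h)

lemma intMul (hW : IsStdBM W) {s t : ℝ} (hs : 0 ≤ s) (ht : 0 ≤ t) :
    Integrable (fun ω => W s ω * W t ω) ℙ := by
  refine Integrable.mono' (((memL2 hW hs).integrable_sq.add
    (memL2 hW ht).integrable_sq).div_const 2)
    (((hW.1 s).mul (hW.1 t)).aestronglyMeasurable) (Filter.Eventually.of_forall fun ω => ?_)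
  simp only [Real.norm_eq_abs, Pi.add_apply]
  nlinarith [sq_nonneg (|W s ω| - |W t ω|), sq_abs (W s ω), sq_abs (W t ω),
    abs_mul (W s ω) (W t ω), abs_nonneg (W s ω * W t ω)]

lemma sqInt (hW : IsStdBM W) {s : ℝ} (hs : 0 ≤ s) :
    ∫ ω, W s ω * W s ω ∂ℙ = s := by rw [hW.2.2.2.2.2 s s hs hs, min_self]

lemma absBound (hW : IsStdBM W) {s t : ℝ} (hs : 0 ≤ s) (ht : 0 ≤ t) :
    ∫ ω, ‖W s ω * W t ω‖ ∂ℙ ≤ (s + t) / 2 := by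
  have h1 : ∫ ω, (W s ω * W s ω + W t ω * W t ω) / 2 ∂ℙ = (s + t) / 2 := by
    rw [integral_div, integral_add (intMul hW hs hs) (intMul hW ht ht),
      sqInt hW hs, sqInt hW ht]
  rw [← h1]
  refine integral_mono ((intMul hW hs ht).norm) ?_ ?_
  · exact ((intMul hW hs hs).add (intMul hW ht ht)).div_const 2
  · intro ω
    simp only [Real.norm_eq_abs]
    nlinarith [abs_nonneg (W s ω * W t ω), abs_mul_abs_self (W s ω * W t ω),
      sq_nonneg (|W s ω| - |W t ω|), sq_abs (W s ω), sq_abs (W t ω),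
      abs_mul (W s ω) (W t ω)]

lemma prodInt1 (hW : IsStdBM W) {a b t : ℝ} (ha : 0 ≤ a) (hab : a ≤ b) (ht : 0 ≤ t)
    (htb : t ≤ b) :
    Integrable (fun q : Ω × ℝ => W q.2 q.1 * W t q.1) ((ℙ : Measure Ω).prod (μI a b)) := by
  have hb : 0 ≤ b := ha.trans hab
  have hmeas : StronglyMeasurable (fun p : ℝ × Ω => W p.1 p.2 * W t p.2) :=
    ((jointSM hW).comp_measurable (measurable_fst.prodMk measurable_snd)).mul
      ((jointSM hW).comp_measurable (measurable_const.prodMk measurable_snd))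
  have hae : ∀ᵐ s ∂(μI a b), s ∈ Set.Ioc a b := ae_restrict_mem measurableSet_Ioc
  have hG : Integrable (fun p : ℝ × Ω => W p.1 p.2 * W t p.2) ((μI a b).prod ℙ) := by
    rw [integrable_prod_iff hmeas.aestronglyMeasurable]
    refine ⟨?_, ?_⟩
    · filter_upwards [hae] with s hs
      exact intMul hW (ha.trans hs.1.le) ht
    · refine Integrable.mono' (integrable_const b)
        hmeas.norm.integral_prod_right'.aestronglyMeasurable ?_
      filter_upwards [hae] with s hs
      have h1 : (0:ℝ) ≤ ∫ ω, ‖W s ω * W t ω‖ ∂ℙ := integral_nonneg fun ω => norm_nonneg _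
      rw [Real.norm_eq_abs, abs_of_nonneg h1]
      have h2 := absBound hW (ha.trans hs.1.le) ht
      have := hs.2
      linarith
  exact hG.swap

lemma prodInt2 (hW : IsStdBM W) {a b : ℝ} (ha : 0 ≤ a) (hab : a ≤ b) :
    Integrable (fun q : Ω × (ℝ × ℝ) => W q.2.1 q.1 * W q.2.2 q.1)
      ((ℙ : Measure Ω).prod ((μI a b).prod (μI a b))) := by
  have hb : 0 ≤ b := ha.trans hab
  have hmeas : StronglyMeasurable (fun p : (ℝ × ℝ) × Ω => W p.1.1 p.2 * W p.1.2 p.2) :=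
    ((jointSM hW).comp_measurable (measurable_fst.fst.prodMk measurable_snd)).mul
      ((jointSM hW).comp_measurable (measurable_fst.snd.prodMk measurable_snd))
  have hprod : (μI a b).prod (μI a b)
      = (volume.prod volume).restrict (Set.Ioc a b ×ˢ Set.Ioc a b) :=
    Measure.prod_restrict _ _
  have hae : ∀ᵐ x ∂((μI a b).prod (μI a b)), x ∈ Set.Ioc a b ×ˢ Set.Ioc a b := by
    rw [hprod]; exact ae_restrict_mem (measurableSet_Ioc.prod measurableSet_Ioc)
  have hG : Integrable (fun p : (ℝ × ℝ) × Ω => W p.1.1 p.2 * W p.1.2 p.2)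
      (((μI a b).prod (μI a b)).prod ℙ) := by
    rw [integrable_prod_iff hmeas.aestronglyMeasurable]
    refine ⟨?_, ?_⟩
    · filter_upwards [hae] with x hx
      exact intMul hW (ha.trans hx.1.1.le) (ha.trans hx.2.1.le)
    · refine Integrable.mono' (integrable_const b)
        hmeas.norm.integral_prod_right'.aestronglyMeasurable ?_
      filter_upwards [hae] with x hx
      have h1 : (0:ℝ) ≤ ∫ ω, ‖W x.1 ω * W x.2 ω‖ ∂ℙ := integral_nonneg fun ω => norm_nonneg _
      rw [Real.norm_eq_abs, abs_of_nonneg h1]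
      have h2 := absBound hW (ha.trans hx.1.1.le) (ha.trans hx.2.1.le)
      have := hx.1.2
      have := hx.2.2
      linarith
  exact hG.swap

lemma minInt {a b t : ℝ} (hat : a ≤ t) (htb : t ≤ b) :
    ∫ s in Set.Ioc a b, min s t = t * b - t ^ 2 / 2 - a ^ 2 / 2 := by
  rw [← intervalIntegral.integral_of_le (hat.trans htb)]
  have h1 : IntervalIntegrable (fun s => min s t) volume a t :=
    (continuous_id.min continuous_const).intervalIntegrable _ _
  have h2 : IntervalIntegrable (fun s => min s t) volume t b :=
    (continuous_id.min continuous_const).intervalIntegrable _ _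
  rw [← intervalIntegral.integral_add_adjacent_intervals h1 h2]
  have e1 : ∫ s in a..t, min s t = ∫ s in a..t, s := by
    refine intervalIntegral.integral_congr fun s hs => ?_
    rw [Set.uIcc_of_le hat] at hs
    exact min_eq_left hs.2
  have e2 : ∫ s in t..b, min s t = ∫ s in t..b, t := by
    refine intervalIntegral.integral_congr fun s hs => ?_
    rw [Set.uIcc_of_le htb] at hs
    exact min_eq_right hs.1
  rw [e1, e2, integral_id, intervalIntegral.integral_const, smul_eq_mul]
  ring

lemma polyInt {a b : ℝ} (hab : a ≤ b) :
    ∫ t in Set.Ioc a b, (t * b - t ^ 2 / 2 - a ^ 2 / 2)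
      = b ^ 3 / 3 - a ^ 2 * b + 2 * a ^ 3 / 3 := by
  rw [← intervalIntegral.integral_of_le hab]
  have : ∫ t in a..b, (t * b - t ^ 2 / 2 - a ^ 2 / 2)
      = (∫ t in a..b, t) * b - (∫ t in a..b, t ^ 2) / 2 - (b - a) * (a ^ 2 / 2) := by
    rw [← intervalIntegral.integral_mul_const, ← intervalIntegral.integral_div]
    rw [← intervalIntegral.integral_sub, ← smul_eq_mul, ← intervalIntegral.integral_const,
      ← intervalIntegral.integral_sub]
    · exact ((continuous_id.mul continuous_const).sub
        ((continuous_pow 2).div_const 2)).intervalIntegrable _ _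
    · exact intervalIntegrable_const
    · exact (continuous_id.mul continuous_const).intervalIntegrable _ _
    · exact ((continuous_pow 2).div_const 2).intervalIntegrable _ _
  rw [this, integral_id, integral_pow]
  ring

lemma EXW (hW : IsStdBM W) {a b t : ℝ} (ha : 0 ≤ a) (hab : a ≤ b) (hat : a ≤ t) (htb : t ≤ b) :
    Integrable (fun ω => (∫ s in a..b, W s ω) * W t ω) ℙ ∧
      ∫ ω, (∫ s in a..b, W s ω) * W t ω ∂ℙ = t * b - t ^ 2 / 2 - a ^ 2 / 2 := by
  have ht : 0 ≤ t := ha.trans hat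
  have hI := prodInt1 hW ha hab ht htb
  have hkey : (fun ω => (∫ s in a..b, W s ω) * W t ω)
      = fun ω => ∫ s, W s ω * W t ω ∂(μI a b) := by
    funext ω
    rw [intervalIntegral.integral_of_le hab]
    exact (integral_mul_const (W t ω) fun s => W s ω).symm
  constructor
  · rw [hkey]; exact hI.integral_prod_left
  · rw [hkey]
    rw [integral_integral_swap hI]
    have : ∫ s, ∫ ω, W s ω * W t ω ∂ℙ ∂(μI a b) = ∫ s, min s t ∂(μI a b) := by
      refine integral_congr_ae ?_
      filter_upwards [ae_restrict_mem (μ := volume) measurableSet_Ioc] with s hs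
      exact hW.2.2.2.2.2 s t (ha.trans hs.1.le) ht
    rw [this]
    exact minInt hat htb

lemma EXX (hW : IsStdBM W) {a b : ℝ} (ha : 0 ≤ a) (hab : a ≤ b) :
    Integrable (fun ω => (∫ s in a..b, W s ω) * (∫ s in a..b, W s ω)) ℙ ∧
      ∫ ω, (∫ s in a..b, W s ω) * (∫ s in a..b, W s ω) ∂ℙ
        = b ^ 3 / 3 - a ^ 2 * b + 2 * a ^ 3 / 3 := by
  have hb : 0 ≤ b := ha.trans hab
  have hI := prodInt2 hW ha hab
  have hkey : (fun ω => (∫ s in a..b, W s ω) * (∫ s in a..b, W s ω))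
      = fun ω => ∫ p, W p.1 ω * W p.2 ω ∂((μI a b).prod (μI a b)) := by
    funext ω
    rw [intervalIntegral.integral_of_le hab]
    exact (integral_prod_mul (fun s => W s ω) (fun s => W s ω)).symm
  have hae : ∀ᵐ x ∂((μI a b).prod (μI a b)), x ∈ Set.Ioc a b ×ˢ Set.Ioc a b := by
    rw [show (μI a b).prod (μI a b)
        = (volume.prod volume).restrict (Set.Ioc a b ×ˢ Set.Ioc a b) from
      Measure.prod_restrict _ _]
    exact ae_restrict_mem (measurableSet_Ioc.prod measurableSet_Ioc)
  constructor
  · rw [hkey]; exact hI.integral_prod_left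
  · rw [hkey]
    rw [integral_integral_swap hI]
    have h1 : ∫ p, ∫ ω, W p.1 ω * W p.2 ω ∂ℙ ∂((μI a b).prod (μI a b))
        = ∫ p : ℝ × ℝ, min p.1 p.2 ∂((μI a b).prod (μI a b)) := by
      refine integral_congr_ae ?_
      filter_upwards [hae] with p hp
      exact hW.2.2.2.2.2 p.1 p.2 (ha.trans hp.1.1.le) (ha.trans hp.2.1.le)
    rw [h1]
    have hmin : Integrable (fun p : ℝ × ℝ => min p.1 p.2) ((μI a b).prod (μI a b)) := by
      refine Integrable.mono' (integrable_const b)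
        (continuous_fst.min continuous_snd).aestronglyMeasurable ?_
      filter_upwards [hae] with p hp
      rw [Real.norm_eq_abs, abs_of_nonneg (le_min (ha.trans_lt hp.1.1).le (ha.trans_lt hp.2.1).le)]
      exact min_le_of_left_le hp.1.2
    rw [integral_prod _ hmin]
    have h2 : ∫ x, ∫ y, min x y ∂(μI a b) ∂(μI a b)
        = ∫ x, (x * b - x ^ 2 / 2 - a ^ 2 / 2) ∂(μI a b) := by
      refine integral_congr_ae ?_
      filter_upwards [ae_restrict_mem (μ := volume) measurableSet_Ioc] with x hx
      have : ∫ y, min x y ∂(μI a b) = ∫ y, min y x ∂(μI a b) := by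
        congr 1; funext y; rw [min_comm]
      rw [this]
      exact minInt hx.1.le hx.2
    rw [h2]
    exact polyInt hab

lemma sum1 (M : ℕ) : ∑ ℓ ∈ Finset.range M, ((ℓ : ℝ) + 1) = (M : ℝ) * (M + 1) / 2 := by
  induction M with
  | zero => simp
  | succ n ih => rw [Finset.sum_range_succ, ih]; push_cast; ring

lemma sum2 (M : ℕ) : ∑ ℓ ∈ Finset.range M, ((ℓ : ℝ) + 1) ^ 2
    = (M : ℝ) * (M + 1) * (2 * M + 1) / 6 := by
  induction M with
  | zero => simp
  | succ n ih => rw [Finset.sum_range_succ, ih]; push_cast; ring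

lemma summin (M : ℕ) :
    ∑ ℓ ∈ Finset.range M, ∑ ℓ' ∈ Finset.range M, min ((ℓ : ℝ) + 1) ((ℓ' : ℝ) + 1)
      = (M : ℝ) * (M + 1) * (2 * M + 1) / 6 := by
  induction M with
  | zero => simp
  | succ n ih =>
    rw [Finset.sum_range_succ]
    have hrow : ∀ ℓ ∈ Finset.range n, ∑ ℓ' ∈ Finset.range (n + 1),
        min ((ℓ : ℝ) + 1) ((ℓ' : ℝ) + 1)
        = (∑ ℓ' ∈ Finset.range n, min ((ℓ : ℝ) + 1) ((ℓ' : ℝ) + 1)) + ((ℓ : ℝ) + 1) := by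
      intro ℓ hℓ
      rw [Finset.sum_range_succ]
      congr 1
      refine min_eq_left ?_
      have h := Finset.mem_range.mp hℓ
      have : (ℓ : ℝ) < n := by exact_mod_cast h
      linarith
    rw [Finset.sum_congr rfl hrow, Finset.sum_add_distrib, ih]
    have hlast : ∑ ℓ' ∈ Finset.range (n + 1), min ((n : ℝ) + 1) ((ℓ' : ℝ) + 1)
        = (∑ ℓ' ∈ Finset.range n, ((ℓ' : ℝ) + 1)) + ((n : ℝ) + 1) := by
      rw [Finset.sum_range_succ, min_self]
      congr 1
      refine Finset.sum_congr rfl fun ℓ' hℓ' => ?_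
      refine min_eq_right ?_
      have h := Finset.mem_range.mp hℓ'
      have : (ℓ' : ℝ) < n := by exact_mod_cast h
      linarith
    rw [hlast, sum1]
    push_cast; ring

lemma step (hW : IsStdBM W) {a τ : ℝ} (ha : 0 ≤ a) (hτ : 0 < τ) {M : ℕ}
    (hM : (M : ℝ) = τ⁻¹) :
    Integrable (fun ω => ((∫ s in a..(a + τ), W s ω)
        - ∑ ℓ ∈ Finset.range M, τ ^ 2 * W (a + ((ℓ : ℝ) + 1) * τ ^ 2) ω) ^ 2) ℙ ∧
      ∫ ω, ((∫ s in a..(a + τ), W s ω)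
        - ∑ ℓ ∈ Finset.range M, τ ^ 2 * W (a + ((ℓ : ℝ) + 1) * τ ^ 2) ω) ^ 2 ∂ℙ
      = τ ^ 5 / 3 := by
  have hab : a ≤ a + τ := by linarith
  have hMτ : (M : ℝ) * τ ^ 2 = τ := by rw [hM]; field_simp
  set b := a + τ with hb
  set tpt : ℕ → ℝ := fun ℓ => a + ((ℓ : ℝ) + 1) * τ ^ 2 with htpt
  have htmem : ∀ ℓ ∈ Finset.range M, a ≤ tpt ℓ ∧ tpt ℓ ≤ b := by
    intro ℓ hℓ
    have h := Finset.mem_range.mp hℓ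
    have hc : (ℓ : ℝ) + 1 ≤ (M : ℝ) := by exact_mod_cast h
    constructor
    · have : 0 ≤ ((ℓ : ℝ) + 1) * τ ^ 2 := by positivity
      simp only [htpt]; linarith
    · simp only [htpt, hb]
      nlinarith [sq_nonneg τ]
  set X : Ω → ℝ := fun ω => ∫ s in a..b, W s ω with hX
  have hpt : ∀ ω, (X ω - ∑ ℓ ∈ Finset.range M, τ ^ 2 * W (tpt ℓ) ω) ^ 2
      = X ω * X ω - 2 * (∑ ℓ ∈ Finset.range M, τ ^ 2 * (X ω * W (tpt ℓ) ω))
        + ∑ ℓ ∈ Finset.range M, ∑ ℓ' ∈ Finset.range M,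
            τ ^ 4 * (W (tpt ℓ) ω * W (tpt ℓ') ω) := by
    intro ω
    have h1 : X ω * (∑ ℓ ∈ Finset.range M, τ ^ 2 * W (tpt ℓ) ω)
        = ∑ ℓ ∈ Finset.range M, τ ^ 2 * (X ω * W (tpt ℓ) ω) := by
      rw [Finset.mul_sum]; exact Finset.sum_congr rfl fun ℓ _ => by ring
    have h2 : (∑ ℓ ∈ Finset.range M, τ ^ 2 * W (tpt ℓ) ω)
          * (∑ ℓ' ∈ Finset.range M, τ ^ 2 * W (tpt ℓ') ω)
        = ∑ ℓ ∈ Finset.range M, ∑ ℓ' ∈ Finset.range M,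
            τ ^ 4 * (W (tpt ℓ) ω * W (tpt ℓ') ω) := by
      rw [Finset.sum_mul_sum]
      exact Finset.sum_congr rfl fun ℓ _ => Finset.sum_congr rfl fun ℓ' _ => by ring
    calc (X ω - ∑ ℓ ∈ Finset.range M, τ ^ 2 * W (tpt ℓ) ω) ^ 2
        = X ω * X ω - 2 * (X ω * (∑ ℓ ∈ Finset.range M, τ ^ 2 * W (tpt ℓ) ω))
          + (∑ ℓ ∈ Finset.range M, τ ^ 2 * W (tpt ℓ) ω)
            * (∑ ℓ' ∈ Finset.range M, τ ^ 2 * W (tpt ℓ') ω) := by ring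
      _ = _ := by rw [h1, h2]
  have iXX := (EXX hW ha hab).1
  have eXX := (EXX hW ha hab).2
  have iXW : ∀ ℓ ∈ Finset.range M, Integrable (fun ω => τ ^ 2 * (X ω * W (tpt ℓ) ω)) ℙ :=
    fun ℓ hℓ => ((EXW hW ha hab (htmem ℓ hℓ).1 (htmem ℓ hℓ).2).1).const_mul _
  have iWW : ∀ ℓ ∈ Finset.range M, Integrable
      (fun ω => ∑ ℓ' ∈ Finset.range M, τ ^ 4 * (W (tpt ℓ) ω * W (tpt ℓ') ω)) ℙ :=
    fun ℓ hℓ => integrable_finset_sum _ fun ℓ' hℓ' =>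
      (intMul hW (ha.trans (htmem ℓ hℓ).1) (ha.trans (htmem ℓ' hℓ').1)).const_mul _
  have hF : (fun ω => (X ω - ∑ ℓ ∈ Finset.range M, τ ^ 2 * W (tpt ℓ) ω) ^ 2)
      = fun ω => X ω * X ω - 2 * (∑ ℓ ∈ Finset.range M, τ ^ 2 * (X ω * W (tpt ℓ) ω))
        + ∑ ℓ ∈ Finset.range M, ∑ ℓ' ∈ Finset.range M,
            τ ^ 4 * (W (tpt ℓ) ω * W (tpt ℓ') ω) := funext hpt
  have iSum1 : Integrable (fun ω => ∑ ℓ ∈ Finset.range M, τ ^ 2 * (X ω * W (tpt ℓ) ω)) ℙ :=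
    integrable_finset_sum _ iXW
  have iSum2 : Integrable (fun ω => ∑ ℓ ∈ Finset.range M, ∑ ℓ' ∈ Finset.range M,
      τ ^ 4 * (W (tpt ℓ) ω * W (tpt ℓ') ω)) ℙ := integrable_finset_sum _ iWW
  have iT : Integrable (fun ω => X ω * X ω
      - 2 * ∑ ℓ ∈ Finset.range M, τ ^ 2 * (X ω * W (tpt ℓ) ω)) ℙ := by
    have h := iXX.sub (iSum1.const_mul 2)
    exact h
  constructor
  · rw [hF]
    exact iT.add iSum2
  · rw [hF]
    rw [integral_add iT iSum2,
      integral_sub iXX (iSum1.const_mul 2), integral_const_mul,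
      integral_finset_sum _ iXW, integral_finset_sum _ iWW]
    have eXW : ∀ ℓ ∈ Finset.range M, ∫ ω, τ ^ 2 * (X ω * W (tpt ℓ) ω) ∂ℙ
        = τ ^ 2 * (tpt ℓ * b - tpt ℓ ^ 2 / 2 - a ^ 2 / 2) := by
      intro ℓ hℓ
      rw [integral_const_mul, (EXW hW ha hab (htmem ℓ hℓ).1 (htmem ℓ hℓ).2).2]
    have eWW : ∀ ℓ ∈ Finset.range M, ∫ ω, (∑ ℓ' ∈ Finset.range M,
          τ ^ 4 * (W (tpt ℓ) ω * W (tpt ℓ') ω)) ∂ℙ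
        = ∑ ℓ' ∈ Finset.range M,
            τ ^ 4 * (a + min ((ℓ : ℝ) + 1) ((ℓ' : ℝ) + 1) * τ ^ 2) := by
      intro ℓ hℓ
      rw [integral_finset_sum _ fun ℓ' hℓ' =>
        (intMul hW (ha.trans (htmem ℓ hℓ).1) (ha.trans (htmem ℓ' hℓ').1)).const_mul _]
      refine Finset.sum_congr rfl fun ℓ' hℓ' => ?_
      rw [integral_const_mul, hW.2.2.2.2.2 _ _ (ha.trans (htmem ℓ hℓ).1)
        (ha.trans (htmem ℓ' hℓ').1)]
      simp only [htpt]
      congr 1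
      rw [min_add_add_left, ← min_mul_of_nonneg _ _ (sq_nonneg τ)]
    rw [Finset.sum_congr rfl eXW, Finset.sum_congr rfl eWW, eXX]
    -- now pure algebra with finite sums
    have hA : ∑ ℓ ∈ Finset.range M, τ ^ 2 * (tpt ℓ * b - tpt ℓ ^ 2 / 2 - a ^ 2 / 2)
        = (M : ℝ) * (τ ^ 2 * (a * b - a ^ 2))
          + (τ ^ 4 * (b - a)) * ((M : ℝ) * (M + 1) / 2)
          + (- (τ ^ 6) / 2) * ((M : ℝ) * (M + 1) * (2 * M + 1) / 6) := by
      calc ∑ ℓ ∈ Finset.range M, τ ^ 2 * (tpt ℓ * b - tpt ℓ ^ 2 / 2 - a ^ 2 / 2)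
          = ∑ ℓ ∈ Finset.range M, (τ ^ 2 * (a * b - a ^ 2)
            + (τ ^ 4 * (b - a)) * ((ℓ : ℝ) + 1) + (- (τ ^ 6) / 2) * ((ℓ : ℝ) + 1) ^ 2) :=
          Finset.sum_congr rfl fun ℓ _ => by simp only [htpt]; ring
        _ = _ := by
          rw [Finset.sum_add_distrib, Finset.sum_add_distrib, Finset.sum_const,
            Finset.card_range, ← Finset.mul_sum, ← Finset.mul_sum, sum1, sum2,
            nsmul_eq_mul]
    have hB : ∑ ℓ ∈ Finset.range M, ∑ ℓ' ∈ Finset.range M,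
          τ ^ 4 * (a + min ((ℓ : ℝ) + 1) ((ℓ' : ℝ) + 1) * τ ^ 2)
        = (M : ℝ) * ((M : ℝ) * (τ ^ 4 * a))
          + τ ^ 6 * ((M : ℝ) * (M + 1) * (2 * M + 1) / 6) := by
      calc ∑ ℓ ∈ Finset.range M, ∑ ℓ' ∈ Finset.range M,
            τ ^ 4 * (a + min ((ℓ : ℝ) + 1) ((ℓ' : ℝ) + 1) * τ ^ 2)
          = ∑ ℓ ∈ Finset.range M, ∑ ℓ' ∈ Finset.range M,
            (τ ^ 4 * a + τ ^ 6 * min ((ℓ : ℝ) + 1) ((ℓ' : ℝ) + 1)) :=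
          Finset.sum_congr rfl fun ℓ _ => Finset.sum_congr rfl fun ℓ' _ => by ring
        _ = ∑ ℓ ∈ Finset.range M, ((M : ℝ) * (τ ^ 4 * a)
            + τ ^ 6 * ∑ ℓ' ∈ Finset.range M, min ((ℓ : ℝ) + 1) ((ℓ' : ℝ) + 1)) :=
          Finset.sum_congr rfl fun ℓ _ => by
            rw [Finset.sum_add_distrib, Finset.sum_const, Finset.card_range,
              nsmul_eq_mul, ← Finset.mul_sum]
        _ = (M : ℝ) * ((M : ℝ) * (τ ^ 4 * a))
            + τ ^ 6 * ∑ ℓ ∈ Finset.range M, ∑ ℓ' ∈ Finset.range M,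
              min ((ℓ : ℝ) + 1) ((ℓ' : ℝ) + 1) := by
          rw [Finset.sum_add_distrib, Finset.sum_const, Finset.card_range,
            nsmul_eq_mul, ← Finset.mul_sum]
        _ = _ := by rw [summin]
    rw [hA, hB]
    have hM1 : (M : ℝ) = τ⁻¹ := hM
    have hτ0 : τ ≠ 0 := ne_of_gt hτ
    rw [hb, hM1]
    field_simp
    ring

/-- A standard `ℝ^m`-valued Brownian motion: independent standard components. -/
def IsStdBMVec {Ω : Type} [MeasureSpace Ω] (m : ℕ)
    (W : ℝ → Ω → EuclideanSpace ℝ (Fin m)) : Prop :=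
  (∀ i : Fin m, IsStdBM (fun t ω => W t ω i)) ∧
  (∀ i j : Fin m, i ≠ j → ∀ s t : ℝ, 0 ≤ s → 0 ≤ t →
    IndepFun (fun ω => W s ω i) (fun ω => W t ω j) ℙ)

/-- Total second moment of the fine-mesh Riemann-sum quadrature errors over all steps. -/
theorem bm_vec_total_quadrature_second_moment {Ω : Type} [MeasureSpace Ω]
    [IsProbabilityMeasure (ℙ : Measure Ω)] (m : ℕ)
    (W : ℝ → Ω → EuclideanSpace ℝ (Fin m)) (hW : IsStdBMVec m W)
    (N : ℕ) (hN : 0 < N) (τ T : ℝ) (hτ : 0 < τ) (hT : T = (N : ℝ) * τ)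
    (M : ℕ) (hM : (M : ℝ) = τ⁻¹) :
    ∑ j ∈ Finset.range N,
        ∫ ω, ‖(∫ s in ((j : ℝ) * τ)..(((j : ℝ) + 1) * τ), W s ω)
            - ∑ ℓ ∈ Finset.range M, τ ^ 2 • W ((j : ℝ) * τ + ((ℓ : ℝ) + 1) * τ ^ 2) ω‖ ^ 2 ∂ℙ
      = (m : ℝ) / 3 * T * τ ^ 4 := by
  have hnorm : ∀ v : EuclideanSpace ℝ (Fin m), ‖v‖ ^ 2 = ∑ i, (v i) ^ 2 := by
    intro v
    rw [EuclideanSpace.norm_eq, Real.sq_sqrt (by positivity)]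
    simp [Real.norm_eq_abs, sq_abs]
  have hjterm : ∀ j ∈ Finset.range N,
      ∫ ω, ‖(∫ s in ((j : ℝ) * τ)..(((j : ℝ) + 1) * τ), W s ω)
          - ∑ ℓ ∈ Finset.range M, τ ^ 2 • W ((j : ℝ) * τ + ((ℓ : ℝ) + 1) * τ ^ 2) ω‖ ^ 2 ∂ℙ
      = (m : ℝ) * (τ ^ 5 / 3) := by
    intro j _
    set a : ℝ := (j : ℝ) * τ with hadef
    have ha : 0 ≤ a := by positivity
    have hend : ((j : ℝ) + 1) * τ = a + τ := by rw [hadef]; ring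
    rw [hend]
    have hcont : ∀ ω, Continuous fun s => W s ω :=
      fun ω => (PiLp.continuous_toLp 2 (fun _ : Fin m => ℝ)).comp (continuous_pi fun i => (hW.1 i).2.2.1 ω)
    have hII : ∀ ω, IntervalIntegrable (fun s => W s ω) volume a (a + τ) :=
      fun ω => (hcont ω).intervalIntegrable _ _
    have hcomp : ∀ ω, ∀ i : Fin m,
        ((∫ s in a..(a + τ), W s ω)
          - ∑ ℓ ∈ Finset.range M, τ ^ 2 • W (a + ((ℓ : ℝ) + 1) * τ ^ 2) ω) i
        = (∫ s in a..(a + τ), W s ω i)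
          - ∑ ℓ ∈ Finset.range M, τ ^ 2 * W (a + ((ℓ : ℝ) + 1) * τ ^ 2) ω i := by
      intro ω i
      have h1 : (∫ s in a..(a + τ), W s ω) i = ∫ s in a..(a + τ), W s ω i := by
        have := (EuclideanSpace.proj (𝕜 := ℝ) i).intervalIntegral_comp_comm (hII ω)
        simpa using this.symm
      simp only [PiLp.sub_apply, h1]
      congr 1
      rw [WithLp.ofLp_sum, Finset.sum_apply]
      exact Finset.sum_congr rfl fun ℓ _ => by simp [PiLp.smul_apply, smul_eq_mul]
    have hsteps := fun i : Fin m => step (hW.1 i) ha hτ hM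
    calc ∫ ω, ‖(∫ s in a..(a + τ), W s ω)
            - ∑ ℓ ∈ Finset.range M, τ ^ 2 • W (a + ((ℓ : ℝ) + 1) * τ ^ 2) ω‖ ^ 2 ∂ℙ
        = ∫ ω, ∑ i : Fin m, ((∫ s in a..(a + τ), W s ω i)
            - ∑ ℓ ∈ Finset.range M, τ ^ 2 * W (a + ((ℓ : ℝ) + 1) * τ ^ 2) ω i) ^ 2 ∂ℙ := by
          congr 1; funext ω
          rw [hnorm]
          exact Finset.sum_congr rfl fun i _ => by rw [hcomp ω i]
      _ = ∑ i : Fin m, ∫ ω, ((∫ s in a..(a + τ), W s ω i)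
            - ∑ ℓ ∈ Finset.range M, τ ^ 2 * W (a + ((ℓ : ℝ) + 1) * τ ^ 2) ω i) ^ 2 ∂ℙ :=
          integral_finset_sum _ fun i _ => (hsteps i).1
      _ = ∑ i : Fin m, τ ^ 5 / 3 := Finset.sum_congr rfl fun i _ => (hsteps i).2
      _ = (m : ℝ) * (τ ^ 5 / 3) := by
          rw [Finset.sum_const, Finset.card_univ, Fintype.card_fin, nsmul_eq_mul]
  rw [Finset.sum_congr rfl hjterm, Finset.sum_const, Finset.card_range, nsmul_eq_mul, hT]
  ring
end

section
/- Let W be a standard real Brownian motion, τ > 0, M = τ^{-1} ∈ ℕ, t_j ≥ 0, t_{j,ℓ} = t_j + ℓτ², t_{j+1} = t_j + τ. Define J^curr = Σ_{ℓ=1}^M ∫_{t_{j,ℓ-1}}^{t_{j,ℓ}} (t_{j+1} - s)(W(s) - W(t_{j,ℓ})) ds. Then E[(J^curr)²] ≤ τ⁶. -/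
open MeasureTheory ProbabilityTheory
open scoped NNReal ENNReal

lemma integrable_sq_gaussianReal (v : ℝ≥0) :
    Integrable (fun x : ℝ => x ^ 2) (gaussianReal 0 v) := by
  by_cases hv : v = 0
  · subst hv
    rw [gaussianReal_zero_var]
    refine ⟨(measurable_id.pow_const 2).aestronglyMeasurable, ?_⟩
    rw [HasFiniteIntegral, lintegral_dirac' _ (by measurability)]
    exact ENNReal.coe_lt_top
  · rw [gaussianReal_of_var_ne_zero 0 hv]
    rw [integrable_withDensity_iff (measurable_gaussianPDF 0 v)
      (Filter.Eventually.of_forall fun x => ENNReal.ofReal_lt_top)]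
    have hb : (0:ℝ) < (2 * (v:ℝ))⁻¹ := by positivity
    have h := integrable_rpow_mul_exp_neg_mul_sq hb (s := 2) (by norm_num)
    have h2 : Integrable (fun x : ℝ => x ^ 2 * Real.exp (-(2*(v:ℝ))⁻¹ * x ^ 2)) := by
      simpa [Real.rpow_natCast] using h
    refine (h2.const_mul ((Real.sqrt (2 * Real.pi * (v:ℝ)))⁻¹)).congr
      (Filter.Eventually.of_forall fun x => ?_)
    have hthis : -(x - 0)^2 / (2 * (v:ℝ)) = -(2*(v:ℝ))⁻¹ * x^2 := by field_simp; ring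
    simp only [gaussianPDF_def]
    rw [ENNReal.toReal_ofReal (gaussianPDFReal_nonneg 0 v x), gaussianPDFReal, hthis]
    ring

lemma bm_sq_integrable {Ω : Type} [MeasureSpace Ω] [IsProbabilityMeasure (ℙ : Measure Ω)] (W : ℝ → Ω → ℝ) (hW : IsStdBM W) {t : ℝ} (ht : 0 ≤ t) :
    Integrable (fun ω => W t ω * W t ω) ℙ := by
  obtain ⟨hmeas, hzero, -, hlaw, -, -⟩ := hW
  have hmap : Measure.map (W t) ℙ = gaussianReal 0 (Real.toNNReal t) := by
    have h := hlaw 0 t le_rfl ht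
    simpa [hzero] using h
  have h : Integrable (fun x : ℝ => x ^ 2) (Measure.map (W t) ℙ) := by
    rw [hmap]; exact integrable_sq_gaussianReal _
  rw [integrable_map_measure (measurable_id'.pow_const 2).aestronglyMeasurable
    (hmeas t).aemeasurable] at h
  simpa [Function.comp_def, pow_two] using h

lemma bm_mul_integrable {Ω : Type} [MeasureSpace Ω] [IsProbabilityMeasure (ℙ : Measure Ω)] (W : ℝ → Ω → ℝ) (hW : IsStdBM W) {u t : ℝ} (hu : 0 ≤ u) (ht : 0 ≤ t) :
    Integrable (fun ω => W u ω * W t ω) ℙ := by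
  refine Integrable.mono' (((bm_sq_integrable W hW hu).add (bm_sq_integrable W hW ht)).div_const 2)
    ((hW.1 u).mul (hW.1 t)).aestronglyMeasurable
    (Filter.Eventually.of_forall fun ω => ?_)
  rw [Real.norm_eq_abs, abs_mul]
  show |W u ω| * |W t ω| ≤ (W u ω * W u ω + W t ω * W t ω) / 2
  nlinarith [mul_self_nonneg (|W u ω| - |W t ω|), abs_mul_abs_self (W u ω),
    abs_mul_abs_self (W t ω)]

lemma bm_increment_sq {Ω : Type} [MeasureSpace Ω] [IsProbabilityMeasure (ℙ : Measure Ω)] (W : ℝ → Ω → ℝ) (hW : IsStdBM W) {s b : ℝ} (hs : 0 ≤ s) (hsb : s ≤ b) :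
    ∫⁻ ω, ENNReal.ofReal ((W s ω - W b ω) ^ 2) ∂ℙ = ENNReal.ofReal (b - s) := by
  have hb : 0 ≤ b := hs.trans hsb
  have hss := bm_sq_integrable W hW hs
  have hbb := bm_sq_integrable W hW hb
  have hsb' := bm_mul_integrable W hW hs hb
  have hint : Integrable (fun ω => (W s ω - W b ω) ^ 2) ℙ := by
    have heq : (fun ω => (W s ω - W b ω) ^ 2)
        = fun ω => W s ω * W s ω - 2 * (W s ω * W b ω) + W b ω * W b ω := by
      funext ω; ring
    rw [heq]
    exact ((hss.sub (hsb'.const_mul 2)).add hbb)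
  have hval : ∫ ω, (W s ω - W b ω) ^ 2 ∂ℙ = b - s := by
    have heq : ∫ ω, (W s ω - W b ω) ^ 2 ∂ℙ
        = ∫ ω, (W s ω * W s ω - 2 * (W s ω * W b ω) + W b ω * W b ω) ∂ℙ := by
      congr 1; funext ω; ring
    have hg : Integrable (fun ω => 2 * (W s ω * W b ω)) ℙ := hsb'.const_mul 2
    have hf : Integrable (fun ω => W s ω * W s ω - 2 * (W s ω * W b ω)) ℙ := hss.sub hg
    rw [heq, integral_add hf hbb, integral_sub hss hg, MeasureTheory.integral_const_mul,
      hW.2.2.2.2.2 s s hs hs, hW.2.2.2.2.2 s b hs hb, hW.2.2.2.2.2 b b hb hb,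
      min_self, min_eq_left hsb, min_self]
    ring
  rw [← ofReal_integral_eq_lintegral_ofReal hint
    (Filter.Eventually.of_forall fun ω => sq_nonneg _), hval]

lemma pointwise_CS {K c d : ℝ} (hK : 0 ≤ K) {φ ψ : ℝ → ℝ} (hψ : Measurable ψ)
    (hφ : ∀ s ∈ Set.Ioc c d, |φ s| ≤ K) :
    ENNReal.ofReal ((∫ s in Set.Ioc c d, φ s * ψ s) ^ 2)
      ≤ ENNReal.ofReal (K ^ 2) * volume (Set.Ioc c d)
        * ∫⁻ s in Set.Ioc c d, ENNReal.ofReal ((ψ s) ^ 2) := by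
  set μ := volume.restrict (Set.Ioc c d) with hμ
  have h1 : ENNReal.ofReal ((∫ s, φ s * ψ s ∂μ) ^ 2)
      = ((‖∫ s, φ s * ψ s ∂μ‖₊ : ℝ≥0∞)) ^ 2 := by
    rw [← enorm_eq_nnnorm, ← ofReal_norm, ← ENNReal.ofReal_pow (norm_nonneg _)]
    congr 1
    rw [Real.norm_eq_abs, sq_abs]
  have h2 : ((‖∫ s, φ s * ψ s ∂μ‖₊ : ℝ≥0∞)) ≤ ∫⁻ s, (‖φ s * ψ s‖₊ : ℝ≥0∞) ∂μ :=
    enorm_integral_le_lintegral_enorm _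
  have h3 : ∫⁻ s, (‖φ s * ψ s‖₊ : ℝ≥0∞) ∂μ
      ≤ ENNReal.ofReal K * ∫⁻ s, (‖ψ s‖₊ : ℝ≥0∞) ∂μ := by
    rw [← lintegral_const_mul' _ _ ENNReal.ofReal_ne_top, hμ]
    refine setLIntegral_mono (hψ.nnnorm.coe_nnreal_ennreal.const_mul _) fun s hs => ?_
    rw [nnnorm_mul, ENNReal.coe_mul]
    refine mul_le_mul_left ?_ _
    rw [← enorm_eq_nnnorm, ← ofReal_norm, Real.norm_eq_abs]
    exact ENNReal.ofReal_le_ofReal (hφ s hs)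
  have h4 : ∫⁻ s, (‖ψ s‖₊ : ℝ≥0∞) ∂μ
      ≤ (∫⁻ s, (‖ψ s‖₊ : ℝ≥0∞) ^ (2:ℝ) ∂μ) ^ (1/2:ℝ) * (μ Set.univ) ^ (1/2:ℝ) := by
    have hpq : Real.HolderConjugate 2 2 := ⟨by norm_num, by norm_num, by norm_num⟩
    have := ENNReal.lintegral_mul_le_Lp_mul_Lq μ hpq
      hψ.nnnorm.coe_nnreal_ennreal.aemeasurable aemeasurable_const (g := fun _ => 1)
    simpa using this
  have hsq : ∀ x y : ℝ≥0∞, x ≤ y → x ^ 2 ≤ y ^ 2 := fun x y h => pow_le_pow_left' h 2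
  calc ENNReal.ofReal ((∫ s, φ s * ψ s ∂μ) ^ 2)
      = ((‖∫ s, φ s * ψ s ∂μ‖₊ : ℝ≥0∞)) ^ 2 := h1
    _ ≤ (ENNReal.ofReal K * ((∫⁻ s, (‖ψ s‖₊ : ℝ≥0∞) ^ (2:ℝ) ∂μ) ^ (1/2:ℝ)
          * (μ Set.univ) ^ (1/2:ℝ))) ^ 2 :=
        hsq _ _ (h2.trans (h3.trans (mul_le_mul_right h4 _)))
    _ = ENNReal.ofReal (K ^ 2) * volume (Set.Ioc c d)
        * ∫⁻ s in Set.Ioc c d, ENNReal.ofReal ((ψ s) ^ 2) := by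
        rw [mul_pow, mul_pow]
        rw [← ENNReal.rpow_natCast ((∫⁻ s, (‖ψ s‖₊ : ℝ≥0∞) ^ (2:ℝ) ∂μ) ^ (1/2:ℝ)) 2,
          ← ENNReal.rpow_mul,
          ← ENNReal.rpow_natCast ((μ Set.univ) ^ (1/2:ℝ)) 2, ← ENNReal.rpow_mul]
        norm_num
        rw [ENNReal.ofReal_pow hK]
        have hμu : μ Set.univ = ENNReal.ofReal (d - c) := by
          rw [hμ, Measure.restrict_apply_univ, Real.volume_Ioc]
        rw [hμu]
        have heq2 : ∀ s : ℝ, (‖ψ s‖₊ : ℝ≥0∞) ^ (2:ℕ) = ENNReal.ofReal ((ψ s) ^ 2) := by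
          intro s
          rw [← enorm_eq_nnnorm, ← ofReal_norm, ← ENNReal.ofReal_pow (norm_nonneg _)]
          rw [Real.norm_eq_abs, sq_abs]
        simp only [heq2]
        rw [hμ]
        ring

/-- Second-moment bound for the weighted micro-step error $\mathcal J_j^{\mathrm{curr}}$. -/
theorem bm_weighted_microstep_second_moment_bound {Ω : Type} [MeasureSpace Ω]
    [IsProbabilityMeasure (ℙ : Measure Ω)] (W : ℝ → Ω → ℝ) (hW : IsStdBM W)
    (τ : ℝ) (hτ : 0 < τ) (M : ℕ) (hM : (M : ℝ) = τ⁻¹) (tj : ℝ) (htj : 0 ≤ tj) :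
    ∫ ω, (∑ ℓ ∈ Finset.range M,
        ∫ s in (tj + (ℓ : ℝ) * τ ^ 2)..(tj + ((ℓ : ℝ) + 1) * τ ^ 2),
          (tj + τ - s) * (W s ω - W (tj + ((ℓ : ℝ) + 1) * τ ^ 2) ω)) ^ 2 ∂ℙ
      ≤ τ ^ 6 := by
  obtain ⟨hmeas, hzero, hcont, hlaw, hindep, hcov⟩ := id hW
  -- basic numerics
  have hM0 : M ≠ 0 := by
    rintro rfl
    rw [Nat.cast_zero] at hM
    exact absurd hM.symm (by positivity)
  have hM1 : (1:ℝ) ≤ (M:ℝ) := by exact_mod_cast Nat.one_le_iff_ne_zero.mpr hM0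
  have hMτ : (M:ℝ) * τ ^ 2 = τ := by
    rw [hM]; field_simp
  -- abbreviations
  set a : ℕ → ℝ := fun ℓ => tj + (ℓ:ℝ) * τ ^ 2 with ha
  set b : ℕ → ℝ := fun ℓ => tj + ((ℓ:ℝ) + 1) * τ ^ 2 with hb
  have hab : ∀ ℓ : ℕ, a ℓ ≤ b ℓ := fun ℓ => by
    simp only [ha, hb]; nlinarith [sq_nonneg τ]
  have ha0 : ∀ ℓ : ℕ, 0 ≤ a ℓ := fun ℓ => by
    simp only [ha]; positivity
  have hba : ∀ ℓ : ℕ, b ℓ - a ℓ = τ ^ 2 := fun ℓ => by simp only [ha, hb]; ring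
  have hble : ∀ ℓ < M, b ℓ ≤ tj + τ := by
    intro ℓ hℓ
    have : ((ℓ:ℝ) + 1) ≤ (M:ℝ) := by exact_mod_cast Nat.succ_le_of_lt hℓ
    have h2 : ((ℓ:ℝ) + 1) * τ ^ 2 ≤ (M:ℝ) * τ ^ 2 :=
      mul_le_mul_of_nonneg_right this (sq_nonneg τ)
    simp only [hb]
    rw [hMτ] at h2
    linarith
  set X : ℕ → Ω → ℝ := fun ℓ ω =>
    ∫ s in Set.Ioc (a ℓ) (b ℓ), (tj + τ - s) * (W s ω - W (b ℓ) ω) with hX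
  -- joint measurability
  have hjm : Measurable (Function.uncurry W) :=
    measurable_uncurry_of_continuous_of_measurable hcont hmeas
  have hXmeas : ∀ ℓ, Measurable (X ℓ) := by
    intro ℓ
    have hG : StronglyMeasurable
        (fun p : Ω × ℝ => (tj + τ - p.2) * (W p.2 p.1 - W (b ℓ) p.1)) :=
      ((measurable_const.sub measurable_snd).mul
        ((hjm.comp (measurable_snd.prodMk measurable_fst)).sub
          ((hmeas _).comp measurable_fst))).stronglyMeasurable
    exact hG.integral_prod_right'.measurable
  -- rewrite interval integrals as set integrals
  have hgoal : ∫ ω, (∑ ℓ ∈ Finset.range M,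
        ∫ s in (tj + (ℓ : ℝ) * τ ^ 2)..(tj + ((ℓ : ℝ) + 1) * τ ^ 2),
          (tj + τ - s) * (W s ω - W (tj + ((ℓ : ℝ) + 1) * τ ^ 2) ω)) ^ 2 ∂ℙ
      = ∫ ω, (∑ ℓ ∈ Finset.range M, X ℓ ω) ^ 2 ∂ℙ := by
    refine integral_congr_ae (Filter.Eventually.of_forall fun ω => ?_)
    have hs : ∀ ℓ ∈ Finset.range M, (∫ s in (tj + (ℓ:ℝ) * τ ^ 2)..(tj + ((ℓ:ℝ) + 1) * τ ^ 2),
        (tj + τ - s) * (W s ω - W (tj + ((ℓ:ℝ) + 1) * τ ^ 2) ω)) = X ℓ ω :=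
      fun ℓ _ => intervalIntegral.integral_of_le (hab ℓ)
    exact congrArg (fun z : ℝ => z ^ 2) (Finset.sum_congr rfl hs)
  rw [hgoal]
  -- pass to lintegral
  have hFm : AEStronglyMeasurable (fun ω => (∑ ℓ ∈ Finset.range M, X ℓ ω) ^ 2) ℙ :=
    ((Finset.measurable_sum _ fun ℓ _ => hXmeas ℓ).pow_const 2).aestronglyMeasurable
  rw [integral_eq_lintegral_of_nonneg_ae (Filter.Eventually.of_forall fun ω => sq_nonneg _) hFm]
  -- key lintegral bound
  have hstep : ∀ ℓ < M, ∀ ω : Ω, ENNReal.ofReal ((X ℓ ω) ^ 2)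
      ≤ (ENNReal.ofReal (τ ^ 2) * ENNReal.ofReal (τ ^ 2)) *
        ∫⁻ s in Set.Ioc (a ℓ) (b ℓ), ENNReal.ofReal ((W s ω - W (b ℓ) ω) ^ 2) := by
    intro ℓ hℓ ω
    have hψ : Measurable (fun s => W s ω - W (b ℓ) ω) :=
      ((hcont ω).sub continuous_const).measurable
    have hbound : ∀ s ∈ Set.Ioc (a ℓ) (b ℓ), |tj + τ - s| ≤ τ := by
      intro s hs
      have h1 : a ℓ < s := hs.1
      have h2 : s ≤ b ℓ := hs.2
      have h3 : tj ≤ a ℓ := by simp only [ha]; nlinarith [sq_nonneg τ]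
      have h4 : b ℓ ≤ tj + τ := hble ℓ hℓ
      rw [abs_le]
      constructor <;> linarith
    have h := pointwise_CS hτ.le hψ (φ := fun s => tj + τ - s) hbound
    have hvol : volume (Set.Ioc (a ℓ) (b ℓ)) = ENNReal.ofReal (τ ^ 2) := by
      rw [Real.volume_Ioc, hba ℓ]
    rw [hvol] at h
    exact h
  have hXb : ∀ ℓ ∈ Finset.range M,
      ∫⁻ ω, ENNReal.ofReal ((X ℓ ω) ^ 2) ∂ℙ ≤ ENNReal.ofReal (τ ^ 2) ^ 4 := by
    intro ℓ hℓ
    rw [Finset.mem_range] at hℓ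
    have hTon : ∫⁻ ω, (∫⁻ s in Set.Ioc (a ℓ) (b ℓ),
          ENNReal.ofReal ((W s ω - W (b ℓ) ω) ^ 2)) ∂ℙ
        = ∫⁻ s in Set.Ioc (a ℓ) (b ℓ),
            (∫⁻ ω, ENNReal.ofReal ((W s ω - W (b ℓ) ω) ^ 2) ∂ℙ) := by
      refine lintegral_lintegral_swap ?_
      refine Measurable.aemeasurable ?_
      exact (((hjm.comp (measurable_snd.prodMk measurable_fst)).sub
        ((hmeas _).comp measurable_fst)).pow_const 2).ennreal_ofReal
    have hinner : ∫⁻ s in Set.Ioc (a ℓ) (b ℓ),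
          (∫⁻ ω, ENNReal.ofReal ((W s ω - W (b ℓ) ω) ^ 2) ∂ℙ)
        ≤ ENNReal.ofReal (τ ^ 2) * ENNReal.ofReal (τ ^ 2) := by
      have hmono : ∫⁻ s in Set.Ioc (a ℓ) (b ℓ),
            (∫⁻ ω, ENNReal.ofReal ((W s ω - W (b ℓ) ω) ^ 2) ∂ℙ)
          ≤ ∫⁻ _s in Set.Ioc (a ℓ) (b ℓ), ENNReal.ofReal (τ ^ 2) := by
        refine setLIntegral_mono measurable_const fun s hs => ?_
        have hs0 : 0 ≤ s := le_of_lt (lt_of_le_of_lt (ha0 ℓ) hs.1)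
        rw [bm_increment_sq W hW hs0 hs.2]
        refine ENNReal.ofReal_le_ofReal ?_
        have := hs.1
        have := hba ℓ
        linarith
      refine hmono.trans ?_
      rw [setLIntegral_const, Real.volume_Ioc, hba ℓ]
    calc ∫⁻ ω, ENNReal.ofReal ((X ℓ ω) ^ 2) ∂ℙ
        ≤ ∫⁻ ω, (ENNReal.ofReal (τ ^ 2) * ENNReal.ofReal (τ ^ 2)) *
            (∫⁻ s in Set.Ioc (a ℓ) (b ℓ),
              ENNReal.ofReal ((W s ω - W (b ℓ) ω) ^ 2)) ∂ℙ :=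
          lintegral_mono fun ω => hstep ℓ hℓ ω
      _ = (ENNReal.ofReal (τ ^ 2) * ENNReal.ofReal (τ ^ 2)) *
            ∫⁻ ω, (∫⁻ s in Set.Ioc (a ℓ) (b ℓ),
              ENNReal.ofReal ((W s ω - W (b ℓ) ω) ^ 2)) ∂ℙ :=
          lintegral_const_mul' _ _ (ENNReal.mul_ne_top ENNReal.ofReal_ne_top
            ENNReal.ofReal_ne_top)
      _ ≤ (ENNReal.ofReal (τ ^ 2) * ENNReal.ofReal (τ ^ 2)) *
            (ENNReal.ofReal (τ ^ 2) * ENNReal.ofReal (τ ^ 2)) := by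
          rw [hTon]
          exact mul_le_mul_right hinner _
      _ = ENNReal.ofReal (τ ^ 2) ^ 4 := by ring
  have hkey : ∫⁻ ω, ENNReal.ofReal ((∑ ℓ ∈ Finset.range M, X ℓ ω) ^ 2) ∂ℙ
      ≤ ENNReal.ofReal (τ ^ 6) := by
    calc ∫⁻ ω, ENNReal.ofReal ((∑ ℓ ∈ Finset.range M, X ℓ ω) ^ 2) ∂ℙ
        ≤ ∫⁻ ω, (M : ℝ≥0∞) * ∑ ℓ ∈ Finset.range M, ENNReal.ofReal ((X ℓ ω) ^ 2) ∂ℙ := by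
          refine lintegral_mono fun ω => ?_
          have h := sq_sum_le_card_mul_sum_sq (s := Finset.range M) (f := fun ℓ => X ℓ ω)
          rw [Finset.card_range] at h
          calc ENNReal.ofReal ((∑ ℓ ∈ Finset.range M, X ℓ ω) ^ 2)
              ≤ ENNReal.ofReal ((M:ℝ) * ∑ ℓ ∈ Finset.range M, (X ℓ ω) ^ 2) :=
                ENNReal.ofReal_le_ofReal (by exact_mod_cast h)
            _ = (M : ℝ≥0∞) * ∑ ℓ ∈ Finset.range M, ENNReal.ofReal ((X ℓ ω) ^ 2) := by
                rw [ENNReal.ofReal_mul (by positivity), ENNReal.ofReal_natCast,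
                  ENNReal.ofReal_sum_of_nonneg (fun ℓ _ => sq_nonneg _)]
      _ = (M : ℝ≥0∞) * ∑ ℓ ∈ Finset.range M, ∫⁻ ω, ENNReal.ofReal ((X ℓ ω) ^ 2) ∂ℙ := by
          rw [lintegral_const_mul' _ _ (ENNReal.natCast_ne_top M),
            lintegral_finset_sum' _ (fun ℓ _ =>
              (((hXmeas ℓ).pow_const 2).ennreal_ofReal).aemeasurable)]
      _ ≤ (M : ℝ≥0∞) * ∑ _ℓ ∈ Finset.range M, ENNReal.ofReal (τ ^ 2) ^ 4 :=
          mul_le_mul_right (Finset.sum_le_sum hXb) _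
      _ = ENNReal.ofReal (τ ^ 6) := by
          rw [Finset.sum_const, Finset.card_range, nsmul_eq_mul]
          rw [show (M : ℝ≥0∞) = ENNReal.ofReal ((M:ℝ)) by rw [ENNReal.ofReal_natCast]]
          rw [← ENNReal.ofReal_pow (sq_nonneg τ), ← ENNReal.ofReal_mul (by positivity),
            ← ENNReal.ofReal_mul (by positivity)]
          congr 1
          rw [hM]
          field_simp
  calc (∫⁻ ω, ENNReal.ofReal ((∑ ℓ ∈ Finset.range M, X ℓ ω) ^ 2) ∂ℙ).toReal
      ≤ (ENNReal.ofReal (τ ^ 6)).toReal := ENNReal.toReal_mono ENNReal.ofReal_ne_top hkey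
    _ = τ ^ 6 := ENNReal.toReal_ofReal (by positivity)
end
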